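/- arXiv:1710.04447 — 5 statements merged into one kernel-verified Lean document; each statement's English description precedes it below -/
import Mathlib

section
/- Let |c₀⟩, |c₁⟩ be unit vectors in ℂ² with 0 < |⟨c₀|c₁⟩| < 1. There is no unitary U on ℂ²⊗ℂ² and phases φ_{kl} such that U|c₀c₀⟩ = e^{iφ₀₀}|c₀c₀⟩, U|c₁c₁⟩ = e^{iφ₁₁}|c₁c₀⟩, U|c₀c₁⟩ = e^{iφ₀₁}|c₀c₁⟩, and U|c₁c₀⟩ = e^{iφ₁₀}|c₁c₁⟩ (i.e., no 'CNOT-like' superposition-free unitary exists for non-orthogonal, non-parallel free states). -/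
open Matrix

/-- The inner product ⟨x|y⟩ on ℂ². -/
noncomputable def inp (x y : Fin 2 → ℂ) : ℂ := star x ⬝ᵥ y

/-- The tensor product a ⊗ b of two vectors of ℂ², as a vector of ℂ²⊗ℂ². -/
def tv (a b : Fin 2 → ℂ) : Fin 2 × Fin 2 → ℂ := fun p => a p.1 * b p.2

lemma unitary_inner {n : Type*} [Fintype n] [DecidableEq n]
    (U : Matrix n n ℂ) (hU : U ∈ Matrix.unitaryGroup n ℂ) (x y : n → ℂ) :
    star (U.mulVec x) ⬝ᵥ (U.mulVec y) = star x ⬝ᵥ y := by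
  rw [Matrix.star_mulVec, Matrix.dotProduct_mulVec, Matrix.vecMul_vecMul,
    (show Uᴴ * U = 1 from hU.1), Matrix.vecMul_one]

lemma inp_tv (a b c d : Fin 2 → ℂ) :
    star (tv a b) ⬝ᵥ (tv c d) = (star a ⬝ᵥ c) * (star b ⬝ᵥ d) := by
  simp only [dotProduct, tv, Pi.star_apply, star_mul', Fintype.sum_prod_type,
    Finset.sum_mul_sum]
  apply Finset.sum_congr rfl; intro i _
  apply Finset.sum_congr rfl; intro j _
  ring

/-- No "CNOT-like" superposition-free unitary exists for non-orthogonal,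
non-parallel free states |c₀⟩, |c₁⟩. -/
theorem stmt_1 (c₀ c₁ : Fin 2 → ℂ) (h₀ : inp c₀ c₀ = 1) (h₁ : inp c₁ c₁ = 1)
    (hlow : 0 < ‖inp c₀ c₁‖) (hup : ‖inp c₀ c₁‖ < 1) :
    ¬ ∃ (U : Matrix (Fin 2 × Fin 2) (Fin 2 × Fin 2) ℂ) (φ₀₀ φ₁₁ φ₀₁ φ₁₀ : ℝ),
      U ∈ Matrix.unitaryGroup (Fin 2 × Fin 2) ℂ ∧
      U.mulVec (tv c₀ c₀) = Complex.exp (Complex.I * φ₀₀) • tv c₀ c₀ ∧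
      U.mulVec (tv c₁ c₁) = Complex.exp (Complex.I * φ₁₁) • tv c₁ c₀ ∧
      U.mulVec (tv c₀ c₁) = Complex.exp (Complex.I * φ₀₁) • tv c₀ c₁ ∧
      U.mulVec (tv c₁ c₀) = Complex.exp (Complex.I * φ₁₀) • tv c₁ c₁ := by
  rintro ⟨U, φ₀₀, φ₁₁, φ₀₁, φ₁₀, hU, e00, e11, e01, e10⟩
  set s : ℂ := inp c₀ c₁ with hs
  have key : star (U.mulVec (tv c₀ c₀)) ⬝ᵥ (U.mulVec (tv c₁ c₁)) = s * s := by
    rw [unitary_inner U hU, inp_tv]; rfl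
  rw [e00, e11] at key
  have key2 : star (Complex.exp (Complex.I * φ₀₀) • tv c₀ c₀) ⬝ᵥ
      (Complex.exp (Complex.I * φ₁₁) • tv c₁ c₀) =
      star (Complex.exp (Complex.I * φ₀₀)) * Complex.exp (Complex.I * φ₁₁) * (s * 1) := by
    simp only [star_smul, smul_dotProduct, dotProduct_smul, smul_eq_mul, inp_tv]
    rw [show star c₀ ⬝ᵥ c₁ = s from rfl, show star c₀ ⬝ᵥ c₀ = (1 : ℂ) from h₀]
    push_cast
    ring
  rw [key2] at key
  have habs := congrArg (‖·‖) key
  simp only [mul_one, norm_mul, Complex.star_def, Complex.norm_conj, Complex.norm_exp,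
    Complex.mul_re, Complex.I_re, Complex.I_im, Complex.ofReal_re, Complex.ofReal_im,
    zero_mul, one_mul, mul_zero, sub_zero, zero_sub, neg_zero, sub_self,
    Real.exp_zero] at habs
  have : ‖s‖ = 1 := by
    have h0 : ‖s‖ ≠ 0 := ne_of_gt hlow
    field_simp at habs
    nlinarith [hlow]
  linarith [hup]
end

section
/- Let |c₀⟩, |c₁⟩ be unit vectors in ℂ² with 0 < |⟨c₀|c₁⟩| < 1. If a unitary U on ℂ²⊗ℂ² maps each product state |c_k⟩⊗|c_l⟩ (k,l ∈ {0,1}) to some e^{iφ_{kl}}|c_m⟩⊗|c_n⟩ with m,n ∈ {0,1}, then U maps every product state (with respect to the tensor factorization) to a product state; in particular U cannot map any product state to an entangled state. -/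
open Matrix

lemma dot_tv (x y x' y' : Fin 2 → ℂ) : star (tv x y) ⬝ᵥ tv x' y' = inp x x' * inp y y' := by
  simp [tv, inp, dotProduct, Fintype.sum_prod_type, Fin.sum_univ_two]
  ring

lemma inp_conj (x y : Fin 2 → ℂ) : inp y x = (starRingEnd ℂ) (inp x y) := by
  simp [inp, dotProduct, Fin.sum_univ_two]
  ring

lemma smulDot (z z' : ℂ) (x y : Fin 2 × Fin 2 → ℂ) :
    star (z • x) ⬝ᵥ (z' • y) = (starRingEnd ℂ) z * z' * (star x ⬝ᵥ y) := by
  simp [star_smul, smul_dotProduct, dotProduct_smul, smul_eq_mul]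
  ring

lemma fin2_ne {a b c : Fin 2} (h : a ≠ b) (h' : c ≠ b) : a = c := by
  revert h h'; revert a b c; decide

lemma sideLem {r : ℝ} (h0 : 0 < r) (h1 : r < 1) {p q : Prop} [Decidable p] [Decidable q]
    (h : (if p then (1:ℝ) else r) * (if q then 1 else r) = r) :
    (p ∧ ¬q) ∨ (¬p ∧ q) := by
  split_ifs at h with hp hq hq
  · exfalso; nlinarith
  · exact Or.inl ⟨hp, hq⟩
  · exact Or.inr ⟨hp, hq⟩
  · exfalso; nlinarith

lemma diagLem {r : ℝ} (h0 : 0 < r) (h1 : r < 1) {p q : Prop} [Decidable p] [Decidable q]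
    (h : (if p then (1:ℝ) else r) * (if q then 1 else r) = r * r) :
    ¬p ∧ ¬q := by
  split_ifs at h with hp hq hq
  · exfalso; nlinarith
  · exfalso; nlinarith
  · exfalso; nlinarith
  · exact ⟨hp, hq⟩

lemma rank1 (v : Fin 2 × Fin 2 → ℂ) (h : v (0,0) * v (1,1) = v (0,1) * v (1,0)) :
    ∃ x y : Fin 2 → ℂ, v = tv x y := by
  by_cases h0 : v (0,0) = 0
  · by_cases h1 : v (0,1) = 0
    · refine ⟨![0,1], ![v (1,0), v (1,1)], ?_⟩
      funext p
      obtain ⟨i, j⟩ := p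
      fin_cases i <;> fin_cases j <;> simp_all [tv]
    · have h2 : v (1,0) = 0 := by
        have h3 : v (0,1) * v (1,0) = 0 := by rw [← h, h0, zero_mul]
        rcases mul_eq_zero.mp h3 with hc | hc
        · exact absurd hc h1
        · exact hc
      refine ⟨![v (0,1), v (1,1)], ![0,1], ?_⟩
      funext p
      obtain ⟨i, j⟩ := p
      fin_cases i <;> fin_cases j <;> simp_all [tv]
  · refine ⟨![v (0,0), v (1,0)], ![1, v (0,1) / v (0,0)], ?_⟩
    funext p
    obtain ⟨i, j⟩ := p
    fin_cases i <;> fin_cases j <;> simp_all [tv] <;> field_simp <;> linear_combination h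

/-- A superposition-free unitary (w.r.t. non-orthogonal, non-parallel free states
c 0, c 1 of each qubit) maps every product state to a product state; in particular
it cannot create entanglement from any product state. -/
theorem stmt_2 (c : Fin 2 → Fin 2 → ℂ)
    (hunit : ∀ k, inp (c k) (c k) = 1)
    (hlow : 0 < ‖inp (c 0) (c 1)‖)
    (hup : ‖inp (c 0) (c 1)‖ < 1)
    (U : Matrix (Fin 2 × Fin 2) (Fin 2 × Fin 2) ℂ)
    (hU : U ∈ Matrix.unitaryGroup (Fin 2 × Fin 2) ℂ)
    (hfree : ∀ k l : Fin 2, ∃ (φ : ℝ) (m n : Fin 2),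
      U.mulVec (tv (c k) (c l)) = Complex.exp (Complex.I * φ) • tv (c m) (c n)) :
    ∀ a b : Fin 2 → ℂ, ∃ a' b' : Fin 2 → ℂ, U.mulVec (tv a b) = tv a' b' := by
  intro a b
  obtain ⟨r, hrdef⟩ : ∃ r : ℝ, r = ‖inp (c 0) (c 1)‖ := ⟨_, rfl⟩
  have hr0 : 0 < r := hrdef ▸ hlow
  have hr1 : r < 1 := hrdef ▸ hup
  have g10 : inp (c 1) (c 0) = (starRingEnd ℂ) (inp (c 0) (c 1)) := inp_conj _ _
  have gabs : ∀ p q : Fin 2, ‖inp (c p) (c q)‖ =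
      if p = q then 1 else r := by
    intro p q
    by_cases hpq : p = q
    · subst hpq; rw [if_pos rfl, hunit p]; simp
    · rw [if_neg hpq]
      have hok : (p = 0 ∧ q = 1) ∨ (p = 1 ∧ q = 0) := by revert hpq; revert p q; decide
      rcases hok with ⟨hp, hq⟩ | ⟨hp, hq⟩ <;> subst hp <;> subst hq
      · exact hrdef.symm
      · rw [g10, Complex.norm_conj]; exact hrdef.symm
  -- linear independence of c 0, c 1
  have lag : inp (c 0) (c 1) * inp (c 1) (c 0) =
      1 - (c 0 0 * c 1 1 - c 0 1 * c 1 0) *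
        (starRingEnd ℂ) (c 0 0 * c 1 1 - c 0 1 * c 1 0) := by
    have h0 := hunit 0
    have h1 := hunit 1
    simp only [inp, dotProduct, Fin.sum_univ_two, Pi.star_apply, RCLike.star_def,
      _root_.map_mul, _root_.map_sub] at *
    linear_combination ((starRingEnd ℂ) (c 1 0) * c 1 0 + (starRingEnd ℂ) (c 1 1) * c 1 1) * h0 + h1
  have hwne : (c 0 0 * c 1 1 - c 0 1 * c 1 0) ≠ 0 := by
    intro hw
    rw [hw] at lag
    simp only [zero_mul, mul_zero, sub_zero] at lag
    have habs := congrArg (‖·‖) lag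
    simp only [norm_mul, g10, Complex.norm_conj, norm_one] at habs
    nlinarith
  have hspan : ∀ x : Fin 2 → ℂ, ∃ α β : ℂ, x = α • c 0 + β • c 1 := by
    intro x
    refine ⟨(x 0 * c 1 1 - x 1 * c 1 0) / (c 0 0 * c 1 1 - c 0 1 * c 1 0),
            (x 1 * c 0 0 - x 0 * c 0 1) / (c 0 0 * c 1 1 - c 0 1 * c 1 0), ?_⟩
    funext i
    fin_cases i <;>
      simp only [Fin.zero_eta, Fin.mk_one, Pi.add_apply, Pi.smul_apply, smul_eq_mul] <;>
      rw [div_mul_eq_mul_div, div_mul_eq_mul_div, ← add_div, eq_div_iff hwne] <;> ring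
  -- unitarity
  have hUU : Uᴴ * U = 1 := by
    have h := hU.1
    rwa [Matrix.star_eq_conjTranspose] at h
  have key : ∀ k l k' l' : Fin 2,
      star (U.mulVec (tv (c k) (c l))) ⬝ᵥ U.mulVec (tv (c k') (c l')) =
      inp (c k) (c k') * inp (c l) (c l') := by
    intro k l k' l'
    rw [Matrix.star_mulVec, Matrix.dotProduct_mulVec, Matrix.vecMul_vecMul, hUU,
      Matrix.vecMul_one, dot_tv]
  have hzc : ∀ t : ℝ, (starRingEnd ℂ) (Complex.exp (Complex.I * t)) *
      Complex.exp (Complex.I * t) = 1 := by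
    intro t
    rw [← Complex.exp_conj, ← Complex.exp_add]
    simp [_root_.map_mul, Complex.conj_I, Complex.conj_ofReal]
  have hac : ∀ t : ℝ, ‖Complex.exp (Complex.I * t)‖ = 1 := by
    intro t
    simp [Complex.norm_exp]
  obtain ⟨p00, m00, n00, h00⟩ := hfree 0 0
  obtain ⟨p01, m01, n01, h01⟩ := hfree 0 1
  obtain ⟨p10, m10, n10, h10⟩ := hfree 1 0
  obtain ⟨p11, m11, n11, h11⟩ := hfree 1 1
  set z00 := Complex.exp (Complex.I * p00) with hz00d
  set z01 := Complex.exp (Complex.I * p01) with hz01d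
  set z10 := Complex.exp (Complex.I * p10) with hz10d
  set z11 := Complex.exp (Complex.I * p11) with hz11d
  have hz00 : (starRingEnd ℂ) z00 * z00 = 1 := by rw [hz00d]; exact hzc p00
  have hz01 : (starRingEnd ℂ) z01 * z01 = 1 := by rw [hz01d]; exact hzc p01
  have hz10 : (starRingEnd ℂ) z10 * z10 = 1 := by rw [hz10d]; exact hzc p10
  have hz11 : (starRingEnd ℂ) z11 * z11 = 1 := by rw [hz11d]; exact hzc p11
  have ha00 : ‖z00‖ = 1 := by rw [hz00d]; exact hac p00
  have ha01 : ‖z01‖ = 1 := by rw [hz01d]; exact hac p01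
  have ha10 : ‖z10‖ = 1 := by rw [hz10d]; exact hac p10
  have ha11 : ‖z11‖ = 1 := by rw [hz11d]; exact hac p11
  -- the six (well, four needed) unitarity equations
  have E1 := key 0 0 0 1
  rw [h00, h01, smulDot, dot_tv] at E1
  have E6 := key 1 0 1 1
  rw [h10, h11, smulDot, dot_tv] at E6
  have E3 := key 0 0 1 1
  rw [h00, h11, smulDot, dot_tv] at E3
  have E4 := key 0 1 1 0
  rw [h01, h10, smulDot, dot_tv] at E4
  -- distance constraints
  have S1 : (m00 = m01 ∧ ¬ n00 = n01) ∨ (¬ m00 = m01 ∧ n00 = n01) := by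
    apply sideLem hr0 hr1
    have hA := congrArg (‖·‖) E1
    simp only [norm_mul, Complex.norm_conj, ha00, ha01, gabs] at hA
    simpa using hA
  have D1 : ¬ m00 = m11 ∧ ¬ n00 = n11 := by
    apply diagLem hr0 hr1
    have hA := congrArg (‖·‖) E3
    simp only [norm_mul, Complex.norm_conj, ha00, ha11, gabs] at hA
    simpa using hA
  have D2 : ¬ m01 = m10 ∧ ¬ n01 = n10 := by
    apply diagLem hr0 hr1
    have hA := congrArg (‖·‖) E4
    simp only [norm_mul, Complex.norm_conj, ha01, ha10, gabs] at hA
    simpa using hA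
  obtain ⟨hmD, hnD⟩ := D1
  obtain ⟨hmX, hnX⟩ := D2
  -- decomposition of a, b
  obtain ⟨α0, α1, ha⟩ := hspan a
  obtain ⟨β0, β1, hb⟩ := hspan b
  have htv : tv a b = (α0*β0) • tv (c 0) (c 0) + (α0*β1) • tv (c 0) (c 1)
      + (α1*β0) • tv (c 1) (c 0) + (α1*β1) • tv (c 1) (c 1) := by
    rw [ha, hb]; funext p
    simp only [tv, Pi.add_apply, Pi.smul_apply, smul_eq_mul]
    ring
  have hv : U.mulVec (tv a b) = (α0*β0*z00) • tv (c m00) (c n00)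
      + (α0*β1*z01) • tv (c m01) (c n01)
      + (α1*β0*z10) • tv (c m10) (c n10)
      + (α1*β1*z11) • tv (c m11) (c n11) := by
    rw [htv, Matrix.mulVec_add, Matrix.mulVec_add, Matrix.mulVec_add,
      Matrix.mulVec_smul, Matrix.mulVec_smul, Matrix.mulVec_smul, Matrix.mulVec_smul,
      h00, h01, h10, h11]
    funext p
    simp only [Pi.add_apply, Pi.smul_apply, smul_eq_mul]
    ring
  rcases S1 with ⟨hm01, hn01⟩ | ⟨hm01, hn01⟩
  · -- case A : m00 = m01, n00 ≠ n01
    have hm10 : m10 ≠ m00 := by rw [hm01]; exact Ne.symm hmX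
    have hn10 : n10 = n00 := fin2_ne (Ne.symm hnX) hn01
    have hm11 : m11 = m10 := fin2_ne (Ne.symm hmD) hm10
    have hn11 : n11 = n01 := fin2_ne (Ne.symm hnD) (Ne.symm hn01)
    have hgne : inp (c n00) (c n01) ≠ 0 := by
      intro hg
      have hgg := gabs n00 n01
      rw [hg, if_neg hn01, norm_zero] at hgg
      exact absurd hgg.symm (ne_of_gt hr0)
    rw [← hm01, hunit m00, hunit 0] at E1
    rw [hm11, hunit m10, hn10, hn11, hunit 1] at E6
    have h7 : (starRingEnd ℂ) z00 * z01 = (starRingEnd ℂ) z10 * z11 := by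
      apply mul_right_cancel₀ hgne
      linear_combination E1 - E6
    have hphase : z00 * z11 = z01 * z10 := by
      linear_combination (-(z00*z10)) * h7 + (z01*z10) * hz00 + (-(z00*z11)) * hz10
    have hdet : U.mulVec (tv a b) (0,0) * U.mulVec (tv a b) (1,1) =
        U.mulVec (tv a b) (0,1) * U.mulVec (tv a b) (1,0) := by
      rw [hv]
      simp only [Pi.add_apply, Pi.smul_apply, smul_eq_mul, tv]
      rw [← hm01, hm11, hn10, hn11]
      linear_combination (α0*α1*β0*β1 * (c m00 0 * c m10 1 - c m00 1 * c m10 0)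
        * (c n00 0 * c n01 1 - c n00 1 * c n01 0)) * hphase
    exact rank1 _ hdet
  · -- case B : m00 ≠ m01, n00 = n01
    have hn10 : n10 ≠ n00 := by rw [hn01]; exact Ne.symm hnX
    have hm10 : m10 = m00 := fin2_ne (Ne.symm hmX) hm01
    have hn11 : n11 = n10 := fin2_ne (Ne.symm hnD) hn10
    have hm11 : m11 = m01 := fin2_ne (Ne.symm hmD) (Ne.symm hm01)
    have hgne : inp (c m00) (c m01) ≠ 0 := by
      intro hg
      have hgg := gabs m00 m01
      rw [hg, if_neg hm01, norm_zero] at hgg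
      exact absurd hgg.symm (ne_of_gt hr0)
    rw [← hn01, hunit n00, hunit 0] at E1
    rw [hm10, hm11, hn11, hunit n10, hunit 1] at E6
    have h7 : (starRingEnd ℂ) z00 * z01 = (starRingEnd ℂ) z10 * z11 := by
      apply mul_right_cancel₀ hgne
      linear_combination E1 - E6
    have hphase : z00 * z11 = z01 * z10 := by
      linear_combination (-(z00*z10)) * h7 + (z01*z10) * hz00 + (-(z00*z11)) * hz10
    have hdet : U.mulVec (tv a b) (0,0) * U.mulVec (tv a b) (1,1) =
        U.mulVec (tv a b) (0,1) * U.mulVec (tv a b) (1,0) := by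
      rw [hv]
      simp only [Pi.add_apply, Pi.smul_apply, smul_eq_mul, tv]
      rw [← hn01, hm10, hm11, hn11]
      linear_combination (α0*α1*β0*β1 * (c m00 0 * c m01 1 - c m00 1 * c m01 0)
        * (c n00 0 * c n10 1 - c n00 1 * c n10 0)) * hphase
    exact rank1 _ hdet
end

section
/- Let |c₀⟩, |c₁⟩ be unit vectors in ℂ² with 0 < |⟨c₀|c₁⟩| < 1. Any unitary U on ℂ²⊗ℂ² satisfying U(|c_k⟩⊗|c_l⟩) = e^{iφ_{kl}}(|c_m⟩⊗|c_n⟩) for all k,l ∈ {0,1} (with m,n depending on k,l) must, up to a global phase, induce one of exactly 8 permutations on the index pairs (k,l): the identity, the swap (k,l)↦(l,k), the flip of both indices, flip-both-then-swap, the flip of the first index, flip-first-then-swap, the flip of the second index, and flip-second-then-swap. -/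
set_option maxRecDepth 10000

open Matrix

/-- Hamming distance on index pairs. -/
def ham (p q : Fin 2 × Fin 2) : ℕ :=
  (if p.1 = q.1 then 0 else 1) + (if p.2 = q.2 then 0 else 1)

/-- Any map on the 2-cube preserving Hamming distance is one of the 8 isometries. -/
theorem perm8 (f : Fin 2 × Fin 2 → Fin 2 × Fin 2)
    (h : ∀ p q, ham (f p) (f q) = ham p q) :
    f = id ∨
    f = (fun kl => (kl.2, kl.1)) ∨
    f = (fun kl => (1 - kl.1, 1 - kl.2)) ∨
    f = (fun kl => (1 - kl.2, 1 - kl.1)) ∨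
    f = (fun kl => (1 - kl.1, kl.2)) ∨
    f = (fun kl => (kl.2, 1 - kl.1)) ∨
    f = (fun kl => (kl.1, 1 - kl.2)) ∨
    f = (fun kl => (1 - kl.2, kl.1)) := by
  revert h; revert f; decide

theorem tv_dot (a b a' b' : Fin 2 → ℂ) :
    star (tv a b) ⬝ᵥ tv a' b' = inp a a' * inp b b' := by
  simp [tv, inp, dotProduct, Fintype.sum_prod_type, Fin.sum_univ_two]
  ring

/-- Any superposition-free unitary on two qubits (free states c 0, c 1 per qubit,
non-orthogonal and non-parallel) induces, up to global phase, one of exactly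
eight permutations on the index pairs (k,l): identity, swap, flip both,
flip-both-then-swap, flip first, flip-first-then-swap, flip second,
flip-second-then-swap. -/
theorem stmt_3 (c : Fin 2 → Fin 2 → ℂ)
    (hunit : ∀ k, inp (c k) (c k) = 1)
    (hlow : 0 < ‖inp (c 0) (c 1)‖)
    (hup : ‖inp (c 0) (c 1)‖ < 1)
    (U : Matrix (Fin 2 × Fin 2) (Fin 2 × Fin 2) ℂ)
    (hU : U ∈ Matrix.unitaryGroup (Fin 2 × Fin 2) ℂ)
    (f : Fin 2 × Fin 2 → Fin 2 × Fin 2) (φ : Fin 2 × Fin 2 → ℝ)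
    (hfree : ∀ kl : Fin 2 × Fin 2,
      U.mulVec (tv (c kl.1) (c kl.2))
        = Complex.exp (Complex.I * φ kl) • tv (c (f kl).1) (c (f kl).2)) :
    f = id ∨
    f = (fun kl => (kl.2, kl.1)) ∨
    f = (fun kl => (1 - kl.1, 1 - kl.2)) ∨
    f = (fun kl => (1 - kl.2, 1 - kl.1)) ∨
    f = (fun kl => (1 - kl.1, kl.2)) ∨
    f = (fun kl => (kl.2, 1 - kl.1)) ∨
    f = (fun kl => (kl.1, 1 - kl.2)) ∨
    f = (fun kl => (1 - kl.2, kl.1)) := by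
  set s : ℝ := ‖inp (c 0) (c 1)‖ with hs
  -- abs of pairwise inner products
  have hconj : inp (c 1) (c 0) = (starRingEnd ℂ) (inp (c 0) (c 1)) := by
    simp [inp, dotProduct, Fin.sum_univ_two]
    ring
  have habs : ∀ k k' : Fin 2,
      ‖inp (c k) (c k')‖ = s ^ (if k = k' then 0 else 1 : ℕ) := by
    intro k k'
    fin_cases k <;> fin_cases k' <;>
      simp [hunit, hconj, hs]
  -- unitary preserves inner products
  have hpres : ∀ x y : Fin 2 × Fin 2 → ℂ,
      star (U.mulVec x) ⬝ᵥ U.mulVec y = star x ⬝ᵥ y := by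
    intro x y
    rw [star_mulVec, dotProduct_mulVec, vecMul_vecMul, ← Matrix.star_eq_conjTranspose,
      hU.1, vecMul_one]
  -- f preserves Hamming distance
  have hham : ∀ p q, ham (f p) (f q) = ham p q := by
    intro p q
    have h1 := hpres (tv (c p.1) (c p.2)) (tv (c q.1) (c q.2))
    rw [hfree p, hfree q] at h1
    have h2 : (starRingEnd ℂ) (Complex.exp (Complex.I * φ p)) * Complex.exp (Complex.I * φ q)
        * (star (tv (c (f p).1) (c (f p).2)) ⬝ᵥ tv (c (f q).1) (c (f q).2))
        = star (tv (c p.1) (c p.2)) ⬝ᵥ tv (c q.1) (c q.2) := by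
      rw [← h1]
      simp [star_smul, smul_dotProduct, dotProduct_smul, smul_eq_mul]
      ring
    have h3 := congrArg (‖·‖) h2
    rw [tv_dot, tv_dot] at h3
    simp only [norm_mul, Complex.norm_conj, Complex.norm_exp] at h3
    have h4 : s ^ ham (f p) (f q) = s ^ ham p q := by
      have e1 : (Complex.I * (φ p : ℂ)).re = 0 := by simp
      have e2 : (Complex.I * (φ q : ℂ)).re = 0 := by simp
      rw [e1, e2, Real.exp_zero, one_mul, one_mul, habs, habs, habs, habs,
        ← pow_add, ← pow_add] at h3
      exact h3
    exact (pow_right_strictAnti₀ hlow hup).injective h4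
  exact perm8 f hham
end

section
/- For a single-qubit density matrix ρ = [[ρ₀₀, ρ₀₁],[ρ₁₀, ρ₁₁]], the trace-norm distance from ρ to the set of diagonal (incoherent) density matrices equals the ℓ₁-norm of coherence: min over diagonal density matrices σ of ‖ρ − σ‖₁ = 2|ρ₀₁|. -/
open Matrix
open scoped ComplexOrder

/-- The trace norm ‖M‖₁ = Tr√(M†M). -/
noncomputable def traceNorm {n : Type*} [Fintype n] [DecidableEq n]
    (M : Matrix n n ℂ) : ℝ :=
  (((Matrix.posSemidef_conjTranspose_mul_self M).1.eigenvectorUnitary : Matrix n n ℂ) *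
      diagonal (((↑) : ℝ → ℂ) ∘ Real.sqrt ∘ (Matrix.posSemidef_conjTranspose_mul_self M).1.eigenvalues) *
      (star (Matrix.posSemidef_conjTranspose_mul_self M).1.eigenvectorUnitary : Matrix n n ℂ)).trace.re

/-- A density matrix: positive semidefinite with unit trace. -/
def IsDensity {n : Type*} [Fintype n] (ρ : Matrix n n ℂ) : Prop :=
  ρ.PosSemidef ∧ ρ.trace = 1

lemma traceNorm_special (a : ℝ) (b : ℂ) :
    traceNorm !![(a:ℂ), b; (starRingEnd ℂ) b, -(a:ℂ)]
      = 2 * Real.sqrt (a ^ 2 + ‖b‖ ^ 2) := by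
  set M : Matrix (Fin 2) (Fin 2) ℂ := !![(a:ℂ), b; (starRingEnd ℂ) b, -(a:ℂ)] with hM
  set c : ℝ := Real.sqrt (a ^ 2 + ‖b‖ ^ 2) with hc
  have hcnn : 0 ≤ c := Real.sqrt_nonneg _
  have hcsq : (c : ℂ) ^ 2 = (a : ℂ) ^ 2 + ((‖b‖ : ℝ) : ℂ) ^ 2 := by
    have h : c ^ 2 = a ^ 2 + ‖b‖ ^ 2 := Real.sq_sqrt (by positivity)
    rw [← Complex.ofReal_pow, h]
    push_cast
    ring
  have hbb : (starRingEnd ℂ) b * b = ((‖b‖ : ℝ) : ℂ) ^ 2 := by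
    rw [mul_comm, Complex.mul_conj, Complex.normSq_eq_norm_sq]
    push_cast
    ring
  have hB : Matrix.PosSemidef (Matrix.diagonal (fun _ : Fin 2 => (c : ℂ))) :=
    Matrix.PosSemidef.diagonal (fun _ => by
      simpa using Complex.zero_le_real.mpr hcnn)
  have hsq : (Matrix.diagonal (fun _ : Fin 2 => (c : ℂ))) ^ 2 = Mᴴ * M := by
    ext i j
    fin_cases i <;> fin_cases j
    · simp [pow_two, hM, Matrix.mul_apply, Fin.sum_univ_two, Matrix.conjTranspose_apply,
        Matrix.diagonal]
      linear_combination hcsq - hbb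
    · simp [pow_two, hM, Matrix.mul_apply, Fin.sum_univ_two, Matrix.conjTranspose_apply,
        Matrix.diagonal]
      ring
    · simp [pow_two, hM, Matrix.mul_apply, Fin.sum_univ_two, Matrix.conjTranspose_apply,
        Matrix.diagonal]
      ring
    · simp [pow_two, hM, Matrix.mul_apply, Fin.sum_univ_two, Matrix.conjTranspose_apply,
        Matrix.diagonal]
      linear_combination hcsq - hbb
  have hMM : Mᴴ * M = algebraMap ℝ (Matrix (Fin 2) (Fin 2) ℂ) (c ^ 2) := by
    rw [← hsq]
    ext i j
    fin_cases i <;> fin_cases j <;>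
      simp [pow_two, Matrix.diagonal, Matrix.mul_apply, Fin.sum_univ_two,
        Matrix.algebraMap_matrix_apply]
  have hsqrt : (((Matrix.posSemidef_conjTranspose_mul_self M).1.eigenvectorUnitary
        : Matrix (Fin 2) (Fin 2) ℂ) *
      diagonal (((↑) : ℝ → ℂ) ∘ Real.sqrt ∘
        (Matrix.posSemidef_conjTranspose_mul_self M).1.eigenvalues) *
      (star (Matrix.posSemidef_conjTranspose_mul_self M).1.eigenvectorUnitary
        : Matrix (Fin 2) (Fin 2) ℂ))
      = algebraMap ℝ (Matrix (Fin 2) (Fin 2) ℂ) c := by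
    calc _ = cfc Real.sqrt (Mᴴ * M) := by
            rw [(Matrix.posSemidef_conjTranspose_mul_self M).1.cfc_eq]; rfl
      _ = _ := by rw [hMM, cfc_algebraMap, Real.sqrt_sq hcnn]
  rw [traceNorm, hsqrt]
  simp [Matrix.trace_fin_two, Matrix.algebraMap_matrix_apply]
  ring

lemma dist_form (ρ σ : Matrix (Fin 2) (Fin 2) ℂ) (hρ : IsDensity ρ)
    (hσ : IsDensity σ) (hd : σ.IsDiag) :
    traceNorm (ρ - σ)
      = 2 * Real.sqrt (((ρ 0 0).re - (σ 0 0).re) ^ 2 + ‖ρ 0 1‖ ^ 2) := by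
  have hρH := hρ.1.1
  have hσH := hσ.1.1
  set a : ℝ := (ρ 0 0).re - (σ 0 0).re with ha
  have h00ρ : ((ρ 0 0).re : ℂ) = ρ 0 0 := hρH.coe_re_apply_self 0
  have h00σ : ((σ 0 0).re : ℂ) = σ 0 0 := hσH.coe_re_apply_self 0
  have htr : (ρ - σ).trace = 0 := by
    rw [Matrix.trace_sub, hρ.2, hσ.2, sub_self]
  have h11 : ρ 1 1 - σ 1 1 = -(a : ℂ) := by
    rw [Matrix.trace_fin_two] at htr
    simp only [Matrix.sub_apply] at htr
    have h2 : ρ 1 1 - σ 1 1 = -(ρ 0 0 - σ 0 0) := by linear_combination htr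
    rw [h2, ha]
    push_cast
    rw [h00ρ, h00σ]
  have h00 : ρ 0 0 - σ 0 0 = (a : ℂ) := by
    rw [ha]
    push_cast
    rw [h00ρ, h00σ]
  have hform : ρ - σ = !![(a:ℂ), ρ 0 1; (starRingEnd ℂ) (ρ 0 1), -(a:ℂ)] := by
    ext i j
    fin_cases i <;> fin_cases j
    · simpa using h00
    · simp [hd (by decide : (0 : Fin 2) ≠ 1)]
    · have h10ρ : ρ 1 0 = (starRingEnd ℂ) (ρ 0 1) := (hρH.apply 1 0).symm
      simp [hd (by decide : (1 : Fin 2) ≠ 0), h10ρ]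
    · simpa using h11
  rw [hform, traceNorm_special]

/-- For a qubit density matrix, the minimal trace-norm distance to the diagonal
(incoherent) density matrices equals the ℓ₁-norm of coherence 2|ρ₀₁|. -/
theorem stmt_6 (ρ : Matrix (Fin 2) (Fin 2) ℂ) (hρ : IsDensity ρ) :
    IsLeast {x : ℝ | ∃ σ : Matrix (Fin 2) (Fin 2) ℂ,
        IsDensity σ ∧ σ.IsDiag ∧ x = traceNorm (ρ - σ)}
      (2 * ‖ρ 0 1‖) := by
  constructor
  · -- membership: σ = diag of ρ
    have hσd : IsDensity (Matrix.diagonal (fun i => ρ i i)) := by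
      constructor
      · refine Matrix.PosSemidef.diagonal (fun i => ?_)
        exact hρ.1.diag_nonneg
      · rw [Matrix.trace_diagonal]
        simpa [Matrix.trace, Matrix.diag] using hρ.2
    refine ⟨Matrix.diagonal (fun i => ρ i i), hσd, Matrix.isDiag_diagonal _, ?_⟩
    rw [dist_form ρ _ hρ hσd (Matrix.isDiag_diagonal _)]
    simp [Real.sqrt_sq_eq_abs]
  · rintro x ⟨σ, hσ, hd, rfl⟩
    rw [dist_form ρ σ hρ hσ hd]
    have h1 : ‖ρ 0 1‖ ^ 2
        ≤ ((ρ 0 0).re - (σ 0 0).re) ^ 2 + ‖ρ 0 1‖ ^ 2 := by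
      nlinarith [sq_nonneg ((ρ 0 0).re - (σ 0 0).re)]
    have h2 := Real.sqrt_le_sqrt h1
    rw [Real.sqrt_sq (norm_nonneg _)] at h2
    linarith
end

section
/- Let ρ = cos²θ|0⟩⟨0| + cosθ sinθ(|0⟩⟨1|+|1⟩⟨0|) + sin²θ|1⟩⟨1| be a pure qubit state and σ = |0⟩⟨0|. Applying the CNOT unitary U (U|x⟩|y⟩ = |x⟩|y⊕x⟩ in the computational basis) to ρ⊗σ yields the pure state |Ψ⟩ = cosθ|00⟩ + sinθ|11⟩, whose concurrence equals |2 cosθ sinθ| = |sin 2θ|, which equals the ℓ₁-norm of coherence of ρ. -/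
open Matrix Kronecker

/-- The CNOT unitary on ℂ²⊗ℂ², U|x⟩|y⟩ = |x⟩|x⊕y⟩, as a matrix. -/
def CNOT : Matrix (Fin 2 × Fin 2) (Fin 2 × Fin 2) ℂ :=
  Matrix.of fun a b => if a.1 = b.1 ∧ a.2 = b.1 + b.2 then 1 else 0

/-- Applying CNOT to ρ⊗σ with ρ = [[cos²θ, cosθsinθ],[sinθcosθ, sin²θ]] and
σ = |0⟩⟨0| yields the pure state |Ψ⟩ = cosθ|00⟩ + sinθ|11⟩, whose concurrence
2|cosθ sinθ| = |sin 2θ| equals the ℓ₁-norm of coherence 2|ρ₀₁| of ρ. -/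
theorem stmt_14 (θ : ℝ)
    (ρ : Matrix (Fin 2) (Fin 2) ℂ)
    (hρ : ρ = !![((Real.cos θ : ℂ)) ^ 2, (Real.cos θ : ℂ) * (Real.sin θ : ℂ);
      (Real.sin θ : ℂ) * (Real.cos θ : ℂ), ((Real.sin θ : ℂ)) ^ 2])
    (σ : Matrix (Fin 2) (Fin 2) ℂ) (hσ : σ = !![(1 : ℂ), 0; 0, 0])
    (Ψ : Fin 2 × Fin 2 → ℂ)
    (hΨ : Ψ = fun q => if q = (0, 0) then (Real.cos θ : ℂ)
      else if q = (1, 1) then (Real.sin θ : ℂ) else 0) :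
    CNOT * (ρ ⊗ₖ σ) * CNOTᴴ = Matrix.vecMulVec Ψ (star Ψ) ∧
    2 * |Real.cos θ * Real.sin θ| = |Real.sin (2 * θ)| ∧
    |Real.sin (2 * θ)| = 2 * ‖ρ 0 1‖ := by
  subst hρ hσ hΨ
  refine ⟨?_, ?_, ?_⟩
  · ext ⟨a1, a2⟩ ⟨b1, b2⟩
    fin_cases a1 <;> fin_cases a2 <;> fin_cases b1 <;> fin_cases b2 <;>
      simp [CNOT, Matrix.mul_apply, Fintype.sum_prod_type, Matrix.kroneckerMap_apply,
        Fin.sum_univ_two, Matrix.conjTranspose_apply, Matrix.vecMulVec_apply,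
        Prod.ext_iff, -Complex.ofReal_cos, -Complex.ofReal_sin, Complex.conj_ofReal] <;>
      norm_num [Fin.ext_iff, -Complex.ofReal_cos, -Complex.ofReal_sin, Complex.conj_ofReal] <;>
      ring
  · simp [Real.sin_two_mul, abs_mul]; ring
  · simp [Real.sin_two_mul, abs_mul, _root_.map_mul, -Complex.ofReal_cos, -Complex.ofReal_sin, Complex.norm_real]; ring
end
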